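/- Let G be a connected graph with σ₂(G) ≥ |V(G)| - k (k ≥ 2) and no spanning tree with at most k leaves. Let P be a longest path with endpoints u, v, and let x₁,…,x_{k-1} be the vertices of G not on P. Then {u, x₁, …, x_{k-1}, v} is an independent set in G. -/

import Mathlib

open SimpleGraph

/-- The degree of a vertex, as the cardinality of its neighbor set. -/
noncomputable def SimpleGraph.deg' {V : Type*} (G : SimpleGraph V) (u : V) : ℕ :=
  (G.neighborSet u).ncard

/-- `G` has a spanning tree with at most `k` leaves. -/
def SimpleGraph.HasSpanningKEndedTree {V : Type*} (G : SimpleGraph V) (k : ℕ) : Prop :=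
  ∃ T : SimpleGraph V, T ≤ G ∧ T.IsTree ∧ {x : V | (T.neighborSet x).ncard = 1}.ncard ≤ k

section ListHelpers

variable {V : Type*}

private lemma boundary_aux {V : Type*} {G : SimpleGraph V} (S : Set V) :
    ∀ {a b : V} (W : G.Walk a b), a ∉ S → b ∈ S →
      ∃ w t, w ∉ S ∧ t ∈ S ∧ G.Adj w t := by
  intro a b W
  induction W with
  | nil => intro h hb; exact absurd hb h
  | cons hab W' ih =>
    rename_i a' b' c'
    intro ha _
    by_cases hbm : b' ∈ S
    · exact ⟨a', b', ha, hbm, hab⟩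
    · exact ih hbm (by assumption)

private lemma getD_idx_eq {α : Type*} (l : List α) (d : α) {m n : ℕ} (h : m = n)
    (hn : n < l.length) : l.getD m d = l[n] := by
  subst h; exact List.getD_eq_getElem l d hn

private lemma getLast?_take_succ (s : List V) (n : ℕ) (h : n < s.length) :
    (s.take (n+1)).getLast? = some s[n] := by
  rw [List.getLast?_eq_getElem?, List.length_take]
  have h1 : min (n+1) s.length - 1 = n := by omega
  rw [h1, List.getElem?_take, if_pos (Nat.lt_succ_self n)]
  exact List.getElem?_eq_getElem h

private lemma chain'_adj_reverse {G : SimpleGraph V} {l : List V} (h : List.Chain' G.Adj l) :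
    List.Chain' G.Adj l.reverse := by
  rw [List.Chain', List.isChain_reverse]
  exact h.imp fun a b hab => hab.symm

private lemma exists_walk_of_chain {G : SimpleGraph V} :
    ∀ (l : List V) (a : V), List.Chain G.Adj a l → ∃ b, ∃ w : G.Walk a b, w.support = a :: l := by
  intro l
  induction l with
  | nil => exact fun a _ => ⟨a, Walk.nil, rfl⟩
  | cons c t ih =>
    intro a h
    rw [List.Chain, List.isChain_cons_cons] at h
    obtain ⟨b, w, hw⟩ := ih c h.2
    exact ⟨b, Walk.cons h.1 w, by simp [Walk.support_cons, hw]⟩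

private lemma LP {G : SimpleGraph V} (s : List V) (hch : List.Chain' G.Adj s)
    (hnd : s.Nodup) (w₀ : V) (hw₀ : w₀ ∉ s) (i j : ℕ)
    (hj1 : 1 ≤ j) (hji : j ≤ i) (hi : i + 1 < s.length)
    (h1 : G.Adj (s.getD 0 w₀) (s.getD (i+1) w₀))
    (h2 : G.Adj (s.getD (s.length - 1) w₀) (s.getD i w₀))
    (h3 : G.Adj w₀ (s.getD j w₀)) :
    ∃ l : List V, List.Chain' G.Adj l ∧ l.Nodup ∧ l.length = s.length + 1 := by
  have hjlen : j < s.length := by omega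
  have hilen : i < s.length := by omega
  have h0len : 0 < s.length := by omega
  rw [List.getD_eq_getElem s w₀ h0len, List.getD_eq_getElem s w₀ hi] at h1
  rw [List.getD_eq_getElem s w₀ (show s.length - 1 < s.length by omega),
    List.getD_eq_getElem s w₀ hilen] at h2
  rw [List.getD_eq_getElem s w₀ hjlen] at h3
  set A : List V := (s.take (j+1)).reverse with hA
  set B : List V := s.drop (i+1) with hB
  set C : List V := ((s.drop (j+1)).take (i-j)).reverse with hC
  have hperm : List.Perm (A ++ (B ++ C)) s := by
    have e1 : (s.drop (j+1)).take (i-j) ++ B = s.drop (j+1) := by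
      have e3 : (s.drop (j+1)).drop (i-j) = s.drop (i+1) := by
        rw [List.drop_drop]; congr 1; omega
      rw [hB, ← e3, List.take_append_drop]
    have s1 : List.Perm (A ++ (B ++ C)) (s.take (j+1) ++ (B ++ (s.drop (j+1)).take (i-j))) :=
      (List.reverse_perm _).append ((List.Perm.refl B).append (List.reverse_perm _))
    have s2 : List.Perm (s.take (j+1) ++ (B ++ (s.drop (j+1)).take (i-j)))
        (s.take (j+1) ++ ((s.drop (j+1)).take (i-j) ++ B)) :=
      List.Perm.append_left _ List.perm_append_comm
    refine (s1.trans s2).trans ?_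
    rw [e1, List.take_append_drop]
  have hAne : A ≠ [] := by
    rw [hA, ← List.length_pos_iff, List.length_reverse, List.length_take]; omega
  have hBne : B ≠ [] := by
    rw [hB, ← List.length_pos_iff, List.length_drop]; omega
  have hA_head : A.head? = some s[j] := by
    rw [hA, List.head?_reverse, getLast?_take_succ s j hjlen]
  have hA_last : A.getLast? = some s[0] := by
    rw [hA, List.getLast?_reverse, List.head?_eq_getElem?, List.getElem?_take,
      if_pos (by omega : 0 < j + 1)]
    exact List.getElem?_eq_getElem h0len
  have hB_head : B.head? = some s[i+1] := by
    rw [hB, List.head?_eq_getElem?, List.getElem?_drop]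
    exact List.getElem?_eq_getElem (by omega)
  have hB_last : B.getLast? = some s[s.length - 1] := by
    rw [hB, List.getLast?_eq_getElem?, List.length_drop, List.getElem?_drop]
    have : i + 1 + (s.length - (i+1) - 1) = s.length - 1 := by omega
    rw [this]
    exact List.getElem?_eq_getElem (by omega)
  have hchA : List.Chain' G.Adj A := chain'_adj_reverse (hch.take _)
  have hchB : List.Chain' G.Adj B := hch.drop _
  have hchC : List.Chain' G.Adj C := chain'_adj_reverse ((hch.drop _).take _)
  refine ⟨w₀ :: (A ++ (B ++ C)), ?_, ?_, ?_⟩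
  · refine List.isChain_cons.mpr ⟨?_, ?_⟩
    · intro y hy
      rw [List.head?_append_of_ne_nil A hAne, hA_head] at hy
      cases hy
      exact h3
    · refine List.isChain_append.mpr ⟨hchA, List.isChain_append.mpr ⟨hchB, hchC, ?_⟩, ?_⟩
      · intro a ha b hb
        rw [hB_last] at ha; cases ha
        by_cases hij : i = j
        · exfalso
          rw [hC, hij, Nat.sub_self, List.take_zero, List.reverse_nil] at hb
          simp at hb
        · have hij' : j < i := by omega
          have hlt : i - j - 1 < (s.drop (j+1)).length := by rw [List.length_drop]; omega
          have : C.head? = some s[i] := by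
            rw [hC, List.head?_reverse]
            have e : i - j = (i - j - 1) + 1 := by omega
            rw [e, getLast?_take_succ _ _ hlt, List.getElem_drop]
            congr 2
            omega
          rw [this] at hb; cases hb
          exact h2
      · intro a ha b hb
        rw [hA_last] at ha; cases ha
        rw [List.head?_append_of_ne_nil B hBne, hB_head] at hb; cases hb
        exact h1
  · refine List.nodup_cons.mpr ⟨fun hmem => hw₀ (hperm.mem_iff.mp hmem), hperm.nodup_iff.mpr hnd⟩
  · rw [List.length_cons, hperm.length_eq]

end ListHelpers

section FunT

variable {V : Type*} {G : SimpleGraph V}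

private def funT (f : V → V) (r : V) : SimpleGraph V where
  Adj a b := a ≠ b ∧ ((a ≠ r ∧ f a = b) ∨ (b ≠ r ∧ f b = a))
  symm := by
    constructor
    intro a b ⟨hne, h⟩
    exact ⟨hne.symm, h.symm⟩
  loopless := by constructor; intro a ⟨hne, _⟩; exact hne rfl

private lemma funT_le (f : V → V) (r : V) (hadj : ∀ x, x ≠ r → G.Adj x (f x)) :
    funT f r ≤ G := by
  intro a b ⟨hne, h⟩
  rcases h with ⟨h1, h2⟩ | ⟨h1, h2⟩
  · exact h2 ▸ hadj a h1
  · exact (h2 ▸ hadj b h1).symm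

private lemma funT_no_two_cycle (f : V → V) (r : V) (rank : V → ℕ)
    (hrank : ∀ x, x ≠ r → rank (f x) < rank x)
    {a b : V} (ha : a ≠ r) (hb : b ≠ r) (hab : f a = b) : f b ≠ a := by
  intro h
  have h1 := hrank a ha
  have h2 := hrank b hb
  rw [hab] at h1; rw [h] at h2; omega

private lemma funT_connected [Fintype V] (f : V → V) (r : V) (rank : V → ℕ)
    (hadj : ∀ x, x ≠ r → G.Adj x (f x))
    (hrank : ∀ x, x ≠ r → rank (f x) < rank x) :
    (funT f r).Connected := by
  have key : ∀ n (x : V), rank x ≤ n → (funT f r).Reachable x r := by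
    intro n
    induction n with
    | zero =>
      intro x hx
      by_cases h : x = r
      · subst h; exact Reachable.refl _
      · exact absurd (hrank x h) (by omega)
    | succ n ih =>
      intro x hx
      by_cases h : x = r
      · subst h; exact Reachable.refl _
      · have hadj' : (funT f r).Adj x (f x) := ⟨(hadj x h).ne, Or.inl ⟨h, rfl⟩⟩
        exact (Adj.reachable hadj').trans (ih (f x) (by have := hrank x h; omega))
  rw [connected_iff]
  refine ⟨fun a b => ?_, ⟨r⟩⟩
  exact (key (rank a) a le_rfl).trans (key (rank b) b le_rfl).symm

private lemma funT_isAcyclic [Fintype V] (f : V → V) (r : V) (rank : V → ℕ)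
    (hrank : ∀ x, x ≠ r → rank (f x) < rank x) :
    (funT f r).IsAcyclic := by
  classical
  intro a c hc
  -- pick max rank vertex on the cycle
  have hne : c.support.toFinset.Nonempty := by
    rw [List.toFinset_nonempty_iff]
    exact c.support_ne_nil
  obtain ⟨z, hz, hzmax⟩ := Finset.exists_max_image c.support.toFinset rank hne
  rw [List.mem_toFinset] at hz
  have hzmax' : ∀ w ∈ c.support, rank w ≤ rank z := fun w hw =>
    hzmax w (List.mem_toFinset.mpr hw)
  set c' := c.rotate z hz with hc'def
  have hc' : c'.IsCycle := hc.rotate hz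
  have hsup : ∀ w ∈ c'.support, rank w ≤ rank z := by
    intro w hw
    rcases (Walk.mem_support_iff c').mp hw with h | h
    · exact h ▸ le_rfl
    · have := (Walk.support_rotate c z hz).mem_iff.mp h
      exact hzmax' w ((Walk.mem_support_iff c).mpr (Or.inr this))
  have hnotnil : ¬ c'.Nil := by
    have h3 := hc'.three_le_length
    intro h
    rw [Walk.nil_iff_length_eq] at h
    omega
  obtain ⟨b, hzb, q, hq⟩ := Walk.not_nil_iff.mp hnotnil
  have hlen3 := hc'.three_le_length
  have hqlen : 2 ≤ q.length := by
    rw [hq, Walk.length_cons] at hlen3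
    omega
  have hbfz : ∀ b' : V, (funT f r).Adj z b' → b' ∈ c'.support → b' = f z := by
    intro b' hadj' hmem
    obtain ⟨hne, h | h⟩ := hadj'
    · exact h.2.symm
    · exfalso
      have h1 := hrank b' h.1
      rw [h.2] at h1
      have h2 := hsup b' hmem
      omega
  have hb : b = f z := hbfz b hzb (by rw [hq, Walk.support_cons]; exact List.mem_cons_of_mem _ q.start_mem_support)
  have hqrevnotnil : ¬ q.reverse.Nil := by
    rw [Walk.nil_iff_length_eq, Walk.length_reverse]
    omega
  obtain ⟨d, hzd, q₂, hq₂⟩ := Walk.not_nil_iff.mp hqrevnotnil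
  have hdq : d ∈ q.support := by
    have h1 : d ∈ q.reverse.support := by
      rw [hq₂, Walk.support_cons]
      exact List.mem_cons_of_mem _ q₂.start_mem_support
    rwa [Walk.support_reverse, List.mem_reverse] at h1
  have hd : d = f z := hbfz d hzd (by rw [hq, Walk.support_cons]; exact List.mem_cons_of_mem _ hdq)
  have he1 : s(z, d) ∈ q.reverse.edges := by
    rw [hq₂, Walk.edges_cons]
    exact List.mem_cons_self
  have he2 : s(z, d) ∈ q.edges := by rwa [Walk.edges_reverse, List.mem_reverse] at he1
  have hnd2 : c'.edges.Nodup := hc'.edges_nodup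
  rw [hq, Walk.edges_cons, List.nodup_cons] at hnd2
  apply hnd2.1
  have heq : d = b := by rw [hd, hb]
  rwa [heq] at he2

private lemma funT_leaves [Fintype V] (f : V → V) (r : V) (rank : V → ℕ)
    (hadj : ∀ x, x ≠ r → G.Adj x (f x))
    (hrank : ∀ x, x ≠ r → rank (f x) < rank x) :
    ∀ x : V, ((funT f r).neighborSet x).ncard = 1 → x = r ∨ ∀ y, y ≠ r → f y ≠ x := by
  intro x hx
  by_cases hxr : x = r
  · exact Or.inl hxr
  right
  intro y hyr hyx
  -- x has two distinct neighbors : f x and y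
  have hn1 : f x ∈ (funT f r).neighborSet x := ⟨(hadj x hxr).ne, Or.inl ⟨hxr, rfl⟩⟩
  have hn2 : y ∈ (funT f r).neighborSet x := by
    refine ⟨?_, Or.inr ⟨hyr, hyx⟩⟩
    have h := (hadj y hyr).ne
    rw [hyx] at h
    exact h.symm
  have hfxy : f x ≠ y := by
    intro h
    have h1 := hrank x hxr
    have h2 := hrank y hyr
    rw [h] at h1
    rw [hyx] at h2
    omega
  have hsub : ({f x, y} : Set V) ⊆ (funT f r).neighborSet x := by
    intro w hw
    rcases hw with h | h
    · exact h ▸ hn1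
    · exact h ▸ hn2
  have h2 := Set.ncard_le_ncard hsub (Set.toFinite _)
  rw [Set.ncard_pair hfxy, hx] at h2
  omega

private lemma master [Fintype V] {k : ℕ} (hnotree : ¬G.HasSpanningKEndedTree k)
    (f : V → V) (r : V) (rank : V → ℕ)
    (hadj : ∀ x, x ≠ r → G.Adj x (f x))
    (hrank : ∀ x, x ≠ r → rank (f x) < rank x)
    (F : Finset V) (hcard : F.card ≤ k)
    (hF : ∀ x : V, (x = r ∨ ∀ y, y ≠ r → f y ≠ x) → x ∈ F) : False := by
  apply hnotree
  refine ⟨funT f r, funT_le f r hadj,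
    ⟨funT_connected f r rank hadj hrank, funT_isAcyclic f r rank hrank⟩, ?_⟩
  have hsub : {x : V | ((funT f r).neighborSet x).ncard = 1} ⊆ (F : Set V) := by
    intro x hx
    exact hF x (funT_leaves f r rank hadj hrank x hx)
  calc {x : V | ((funT f r).neighborSet x).ncard = 1}.ncard
      ≤ (F : Set V).ncard := Set.ncard_le_ncard hsub (Set.toFinite _)
    _ = F.card := Set.ncard_coe_finset F
    _ ≤ k := hcard

end FunT

theorem stmt_12 {V : Type*} [Fintype V] (G : SimpleGraph V) (k : ℕ) (hk : 2 ≤ k)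
    (hconn : G.Connected)
    (hσ : ∀ u v : V, u ≠ v → ¬G.Adj u v →
      (Fintype.card V : ℤ) - k ≤ (G.deg' u : ℤ) + (G.deg' v : ℤ))
    (hnotree : ¬G.HasSpanningKEndedTree k)
    (u v : V) (p : G.Walk u v) (hp : p.IsPath)
    (hlongest : ∀ (a b : V) (q : G.Walk a b), q.IsPath → q.length ≤ p.length) :
    ∀ x y : V, (x = u ∨ x = v ∨ x ∉ p.support) → (y = u ∨ y = v ∨ y ∉ p.support) →
      ¬G.Adj x y := by
  classical
  intro x y hx hy hadj
  by_cases hL0 : p.length = 0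
  · have hq : (Walk.cons hadj Walk.nil).IsPath := by
      rw [Walk.isPath_def]
      simp [Walk.support_cons, Walk.support_nil, hadj.ne]
    have h1 := hlongest x y (Walk.cons hadj Walk.nil) hq
    rw [Walk.length_cons, Walk.length_nil, hL0] at h1
    omega
  have hL1 : 1 ≤ p.length := by omega
  have hnd : p.support.Nodup := hp.support_nodup
  have hch : List.Chain' G.Adj p.support := p.isChain_adj_support
  have hslen : p.support.length = p.length + 1 := p.length_support
  have hs0 : p.support.getD 0 u = u := by
    rw [p.support_eq_cons, List.getD_cons_zero]
  have hsv : p.support.getD p.length u = v := by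
    have h1 : p.support[p.support.length - 1]'(by omega) = v :=
      (List.getLast_eq_getElem p.support_ne_nil).symm.trans p.getLast_support
    rw [getD_idx_eq p.support u (show p.length = p.support.length - 1 by omega) (by omega)]
    exact h1
  have hadj_getD : ∀ m : ℕ, m + 1 < p.support.length →
      G.Adj (p.support.getD m u) (p.support.getD (m+1) u) := by
    intro m hm
    rw [List.getD_eq_getElem _ _ (by omega), List.getD_eq_getElem _ _ hm]
    have h1 := List.isChain_iff_getElem.mp hch m (by omega)
    simpa using h1
  have hidx_getD : ∀ z ∈ p.support, p.support.getD (p.support.idxOf z) u = z := by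
    intro z hz
    rw [List.getD_eq_getElem _ _ (List.idxOf_lt_length_iff.mpr hz)]
    exact List.getElem_idxOf _
  have hidx_lt : ∀ z ∈ p.support, p.support.idxOf z < p.support.length :=
    fun z hz => List.idxOf_lt_length_iff.mpr hz
  have hidx_pos : ∀ z ∈ p.support, z ≠ u → 1 ≤ p.support.idxOf z := by
    intro z hz hzu
    by_contra h
    have h0 : p.support.idxOf z = 0 := by omega
    have h1 := hidx_getD z hz
    rw [h0, hs0] at h1
    exact hzu h1.symm
  have hidx_ne_v : ∀ z ∈ p.support, z ≠ v → p.support.idxOf z < p.length := by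
    intro z hz hzv
    have h1 := hidx_lt z hz
    by_contra h
    have h2 : p.support.idxOf z = p.length := by omega
    have h3 := hidx_getD z hz
    rw [h2, hsv] at h3
    exact hzv h3.symm
  have hidx_u : p.support.idxOf u = 0 := by
    rw [p.support_eq_cons]
    exact List.idxOf_cons_self
  -- no edge from an endpoint to an off-path vertex
  have LemU : ∀ w : V, G.Adj u w → w ∈ p.support := by
    intro w hw
    by_contra hmem
    have hq : (Walk.cons hw.symm p).IsPath := hp.cons hmem
    have h1 := hlongest _ _ _ hq
    rw [Walk.length_cons] at h1
    omega
  have LemV : ∀ w : V, G.Adj v w → w ∈ p.support := by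
    intro w hw
    by_contra hmem
    have hmem' : w ∉ p.reverse.support := by
      rwa [Walk.support_reverse, List.mem_reverse]
    have hq : (Walk.cons hw.symm p.reverse).IsPath := hp.reverse.cons hmem'
    have h1 := hlongest _ _ _ hq
    rw [Walk.length_cons, Walk.length_reverse] at h1
    omega
  -- kill any long nodup chain
  have hkill : ∀ l : List V, List.Chain' G.Adj l → l.Nodup → l.length = p.length + 2 → False := by
    intro l hc hn hl
    cases l with
    | nil => simp at hl
    | cons a t =>
      have hc' : List.Chain G.Adj a t := hc
      obtain ⟨b, w, hw⟩ := exists_walk_of_chain t a hc'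
      have hpath : w.IsPath := by rw [Walk.isPath_def, hw]; exact hn
      have hlen : w.length + 1 = p.length + 2 := by
        have h1 := w.length_support
        rw [hw, List.length_cons] at h1
        rw [List.length_cons] at hl
        omega
      have h2 := hlongest _ _ w hpath
      omega
  -- boundary vertex
  have hbound : ∀ z : V, z ∉ p.support → ∃ w t : V, w ∉ p.support ∧ t ∈ p.support ∧ G.Adj w t := by
    intro z hz
    obtain ⟨W⟩ := hconn z u
    exact boundary_aux {z' : V | z' ∈ p.support} W hz p.start_mem_support
  -- the crossing argument
  have hcross : ∀ i : ℕ, i + 1 ≤ p.length → G.Adj u (p.support.getD (i+1) u) →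
      G.Adj v (p.support.getD i u) → (∃ z, z ∉ p.support) → False := by
    intro i hi hu1 hv1 hex
    obtain ⟨z, hz⟩ := hex
    obtain ⟨w₀, t, hw₀, ht, hwt⟩ := hbound z hz
    have htu : t ≠ u := by rintro rfl; exact hw₀ (LemU w₀ hwt.symm)
    have htv : t ≠ v := by rintro rfl; exact hw₀ (LemV w₀ hwt.symm)
    have hjlen := hidx_lt t ht
    have hsj : p.support.getD (p.support.idxOf t) u = t := hidx_getD t ht
    have hj1 : 1 ≤ p.support.idxOf t := hidx_pos t ht htu
    have hjL : p.support.idxOf t < p.length := hidx_ne_v t ht htv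
    have hDD : ∀ (m : ℕ), m < p.support.length →
        p.support.getD m w₀ = p.support.getD m u := by
      intro m h
      rw [List.getD_eq_getElem _ _ h, List.getD_eq_getElem _ _ h]
    by_cases hji : p.support.idxOf t ≤ i
    · have hg1 : G.Adj (p.support.getD 0 w₀) (p.support.getD (i+1) w₀) := by
        rw [hDD 0 (by omega), hDD (i+1) (by omega), hs0]
        exact hu1
      have hg2 : G.Adj (p.support.getD (p.support.length - 1) w₀) (p.support.getD i w₀) := by
        rw [hDD _ (by omega), hDD i (by omega),
          show p.support.length - 1 = p.length from by omega, hsv]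
        exact hv1
      have hg3 : G.Adj w₀ (p.support.getD (p.support.idxOf t) w₀) := by
        rw [hDD _ (by omega), hsj]
        exact hwt
      obtain ⟨l, hl1, hl2, hl3⟩ := LP p.support hch hnd w₀ hw₀ i (p.support.idxOf t)
        hj1 hji (by omega) hg1 hg2 hg3
      exact hkill l hl1 hl2 (by omega)
    · have hw₀r : w₀ ∉ p.support.reverse := by rwa [List.mem_reverse]
      have hrevD : ∀ (m : ℕ), m < p.support.length →
          p.support.reverse.getD m w₀ = p.support.getD (p.support.length - 1 - m) u := by
        intro m h
        rw [List.getD_eq_getElem _ _ (by rw [List.length_reverse]; omega),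
          List.getD_eq_getElem _ _ (by omega), List.getElem_reverse]
      have hg1 : G.Adj (p.support.reverse.getD 0 w₀)
          (p.support.reverse.getD (p.length - 1 - i + 1) w₀) := by
        rw [hrevD 0 (by omega), hrevD (p.length - 1 - i + 1) (by omega),
          show p.support.length - 1 - 0 = p.length from by omega,
          show p.support.length - 1 - (p.length - 1 - i + 1) = i from by omega, hsv]
        exact hv1
      have hg2 : G.Adj (p.support.reverse.getD (p.support.reverse.length - 1) w₀)
          (p.support.reverse.getD (p.length - 1 - i) w₀) := by
        rw [List.length_reverse,
          show p.support.length - 1 = p.length from by omega,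
          hrevD p.length (by omega), hrevD (p.length - 1 - i) (by omega),
          show p.support.length - 1 - p.length = 0 from by omega,
          show p.support.length - 1 - (p.length - 1 - i) = i + 1 from by omega, hs0]
        exact hu1
      have hg3 : G.Adj w₀ (p.support.reverse.getD (p.length - p.support.idxOf t) w₀) := by
        rw [hrevD _ (by omega),
          show p.support.length - 1 - (p.length - p.support.idxOf t) = p.support.idxOf t
            from by omega, hsj]
        exact hwt
      obtain ⟨l, hl1, hl2, hl3⟩ := LP p.support.reverse (chain'_adj_reverse hch)
        (List.nodup_reverse.mpr hnd) w₀ hw₀r (p.length - 1 - i) (p.length - p.support.idxOf t)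
        (by omega) (by omega) (by rw [List.length_reverse]; omega) hg1 hg2 hg3
      refine hkill l hl1 hl2 ?_
      rw [hl3, List.length_reverse]
      omega
  -- the spine parent function
  set spf : V → V := fun z => p.support.getD (p.support.idxOf z - 1) u with hspf_def
  have hspf_mem : ∀ z ∈ p.support, spf z ∈ p.support := by
    intro z hz
    have h1 := hidx_lt z hz
    simp only [hspf_def]
    rw [List.getD_eq_getElem _ _ (by omega)]
    exact List.getElem_mem _
  have hspf_adj : ∀ z ∈ p.support, z ≠ u → G.Adj z (spf z) := by
    intro z hz hzu
    have h1 := hidx_pos z hz hzu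
    have h2 := hidx_lt z hz
    have h3 := hadj_getD (p.support.idxOf z - 1) (by omega)
    rw [show p.support.idxOf z - 1 + 1 = p.support.idxOf z from by omega, hidx_getD z hz] at h3
    exact h3.symm
  have hspf_idx : ∀ z ∈ p.support, z ≠ u →
      p.support.idxOf (spf z) = p.support.idxOf z - 1 := by
    intro z hz hzu
    have h2 := hidx_lt z hz
    simp only [hspf_def]
    rw [List.getD_eq_getElem _ _ (by omega)]
    exact List.Nodup.idxOf_getElem hnd _ _
  have hspf_child : ∀ z ∈ p.support, z ≠ v → ∃ y', y' ∈ p.support ∧ y' ≠ u ∧ spf y' = z := by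
    intro z hz hzv
    have hiz := hidx_ne_v z hz hzv
    have hlt : p.support.idxOf z + 1 < p.support.length := by omega
    refine ⟨p.support[p.support.idxOf z + 1]'hlt, List.getElem_mem _, ?_, ?_⟩
    · intro h
      have h1 : p.support.idxOf (p.support[p.support.idxOf z + 1]'hlt) =
          p.support.idxOf z + 1 := List.Nodup.idxOf_getElem hnd _ _
      rw [h, hidx_u] at h1
      omega
    · have h1 : p.support.idxOf (p.support[p.support.idxOf z + 1]'hlt) =
          p.support.idxOf z + 1 := List.Nodup.idxOf_getElem hnd _ _
      simp only [hspf_def]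
      rw [h1, show p.support.idxOf z + 1 - 1 = p.support.idxOf z from by omega]
      exact hidx_getD z hz
  -- the u-v case
  have key_uv : ¬ G.Adj u v := by
    intro huv
    by_cases hfull : ∀ z : V, z ∈ p.support
    · refine master hnotree spf u (fun z => p.support.idxOf z) ?_ ?_
        ({u, v} : Finset V) ?_ ?_
      · intro z hz; exact hspf_adj z (hfull z) hz
      · intro z hz
        have h1 := hspf_idx z (hfull z) hz
        have h2 := hidx_pos z (hfull z) hz
        show p.support.idxOf (spf z) < p.support.idxOf z
        omega
      · have h1 : ({u, v} : Finset V).card ≤ 2 := by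
          refine (Finset.card_insert_le _ _).trans ?_
          simp
        omega
      · intro z hz
        rcases hz with rfl | hnc
        · exact Finset.mem_insert_self _ _
        by_cases hzv : z = v
        · subst hzv; simp
        by_cases hzu : z = u
        · subst hzu; simp
        exfalso
        obtain ⟨y', hy1, hy2, hy3⟩ := hspf_child z (hfull z) hzv
        exact hnc y' hy2 hy3
    · push_neg at hfull
      obtain ⟨z, hz⟩ := hfull
      refine hcross (p.length - 1) (by omega) ?_ ?_ ⟨z, hz⟩
      · rw [show p.length - 1 + 1 = p.length from by omega, hsv]
        exact huv
      · have h1 := hadj_getD (p.length - 1) (by omega)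
        rw [show p.length - 1 + 1 = p.length from by omega, hsv] at h1
        exact h1.symm
  -- case analysis
  rcases hx with rfl | rfl | hxo
  · rcases hy with rfl | rfl | hyo
    · exact hadj.ne rfl
    · exact key_uv hadj
    · exact hyo (LemU y hadj)
  · rcases hy with rfl | rfl | hyo
    · exact key_uv hadj.symm
    · exact hadj.ne rfl
    · exact hyo (LemV y hadj)
  rcases hy with rfl | rfl | hyo
  · exact hxo (LemU x hadj.symm)
  · exact hxo (LemV x hadj.symm)
  -- the main case : x and y both off the path
  have hne_uv : u ≠ v := by
    intro h
    have h1 : p.support.getD 0 u = p.support.getD p.length u := by rw [hs0, hsv, h]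
    rw [List.getD_eq_getElem _ _ (by omega), List.getD_eq_getElem _ _ (by omega)] at h1
    have h2 := (hnd.getElem_inj_iff).mp h1
    omega
  have hdeg := hσ u v hne_uv key_uv
  have hfinu : (G.neighborSet u).Finite := Set.toFinite _
  have hfinv : (G.neighborSet v).Finite := Set.toFinite _
  have hDu_card : G.deg' u = hfinu.toFinset.card := Set.ncard_eq_toFinset_card _ _
  have hDv_card : G.deg' v = hfinv.toFinset.card := Set.ncard_eq_toFinset_card _ _
  have hmemDu : ∀ w : V, w ∈ hfinu.toFinset ↔ G.Adj u w := by
    intro w; rw [Set.Finite.mem_toFinset]; rfl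
  have hmemDv : ∀ w : V, w ∈ hfinv.toFinset ↔ G.Adj v w := by
    intro w; rw [Set.Finite.mem_toFinset]; rfl
  have hsum : hfinu.toFinset.card + hfinv.toFinset.card ≤ p.length := by
    have hAcard : (hfinu.toFinset.image (fun w => p.support.idxOf w - 1)).card
        = hfinu.toFinset.card := by
      refine Finset.card_image_of_injOn ?_
      intro w1 h1 w2 h2 he
      rw [Finset.mem_coe, hmemDu] at h1 h2
      have hm1 := LemU w1 h1
      have hm2 := LemU w2 h2
      have hp1 := hidx_pos w1 hm1 h1.ne'
      have hp2 := hidx_pos w2 hm2 h2.ne'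
      have he' : p.support.idxOf w1 - 1 = p.support.idxOf w2 - 1 := he
      have : p.support.idxOf w1 = p.support.idxOf w2 := by omega
      exact (List.idxOf_inj hm1).mp this
    have hBcard : (hfinv.toFinset.image (fun w => p.support.idxOf w)).card
        = hfinv.toFinset.card := by
      refine Finset.card_image_of_injOn ?_
      intro w1 h1 w2 h2 he
      rw [Finset.mem_coe, hmemDv] at h1 h2
      have he' : p.support.idxOf w1 = p.support.idxOf w2 := he
      exact (List.idxOf_inj (LemV w1 h1)).mp he'
    have hAsub : (hfinu.toFinset.image (fun w => p.support.idxOf w - 1)) ⊆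
        Finset.range p.length := by
      intro i hi
      obtain ⟨w, hw, rfl⟩ := Finset.mem_image.mp hi
      rw [hmemDu] at hw
      have h1 := hidx_lt w (LemU w hw)
      have h2 := hidx_pos w (LemU w hw) hw.ne'
      rw [Finset.mem_range]
      show p.support.idxOf w - 1 < p.length
      omega
    have hBsub : (hfinv.toFinset.image (fun w => p.support.idxOf w)) ⊆
        Finset.range p.length := by
      intro i hi
      obtain ⟨w, hw, rfl⟩ := Finset.mem_image.mp hi
      rw [hmemDv] at hw
      rw [Finset.mem_range]
      show p.support.idxOf w < p.length
      exact hidx_ne_v w (LemV w hw) hw.ne'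
    have hdisj : Disjoint (hfinu.toFinset.image (fun w => p.support.idxOf w - 1))
        (hfinv.toFinset.image (fun w => p.support.idxOf w)) := by
      rw [Finset.disjoint_left]
      intro i hiA hiB
      obtain ⟨w1, hw1, he1⟩ := Finset.mem_image.mp hiA
      obtain ⟨w2, hw2, he2⟩ := Finset.mem_image.mp hiB
      rw [hmemDu] at hw1
      rw [hmemDv] at hw2
      have he1' : p.support.idxOf w1 - 1 = i := he1
      have he2' : p.support.idxOf w2 = i := he2
      have hm1 := LemU w1 hw1
      have hm2 := LemV w2 hw2
      have hp1 := hidx_pos w1 hm1 hw1.ne'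
      have hiv := hidx_ne_v w2 hm2 hw2.ne'
      refine hcross i (by omega) ?_ ?_ ⟨x, hxo⟩
      · rw [show i + 1 = p.support.idxOf w1 from by omega, hidx_getD w1 hm1]
        exact hw1
      · rw [show i = p.support.idxOf w2 from by omega, hidx_getD w2 hm2]
        exact hw2
    calc hfinu.toFinset.card + hfinv.toFinset.card
        = (hfinu.toFinset.image (fun w => p.support.idxOf w - 1)).card
          + (hfinv.toFinset.image (fun w => p.support.idxOf w)).card := by
          rw [hAcard, hBcard]
      _ = ((hfinu.toFinset.image (fun w => p.support.idxOf w - 1)) ∪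
          (hfinv.toFinset.image (fun w => p.support.idxOf w))).card :=
          (Finset.card_union_of_disjoint hdisj).symm
      _ ≤ (Finset.range p.length).card :=
          Finset.card_le_card (Finset.union_subset hAsub hBsub)
      _ = p.length := Finset.card_range _
  set offF : Finset V := Finset.univ.filter (fun z => z ∉ p.support) with hoffF
  have hmem_offF : ∀ z : V, z ∈ offF ↔ z ∉ p.support := by
    intro z; simp [hoffF]
  have hcount : Fintype.card V = (p.length + 1) + offF.card := by
    have h1 := Finset.card_filter_add_card_filter_not
      (s := (Finset.univ : Finset V)) (fun z => z ∈ p.support)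
    have h2 : Finset.univ.filter (fun z => z ∈ p.support) = p.support.toFinset := by
      ext z; simp
    rw [h2, List.toFinset_card_of_nodup hnd, hslen, Finset.card_univ] at h1
    simp only [hoffF]
    omega
  have hmoff : offF.card + 1 ≤ k := by
    rw [hDu_card, hDv_card] at hdeg
    have h1 : (Fintype.card V : ℤ) - k ≤ (hfinu.toFinset.card : ℤ) + hfinv.toFinset.card := hdeg
    have h2 := hsum
    have h3 := hcount
    omega
  -- closer-to-u step function
  have hstep' : ∀ w : V, ∃ w' : V, w ≠ u → G.Adj w w' ∧ G.dist w' u < G.dist w u := by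
    intro w
    by_cases hw : w = u
    · exact ⟨u, fun h => absurd hw h⟩
    · obtain ⟨W, hWlen⟩ := hconn.exists_walk_length_eq_dist w u
      cases W with
      | nil => exact absurd rfl hw
      | @cons _ b' _ h W' =>
        refine ⟨b', fun _ => ⟨h, ?_⟩⟩
        have h1 := dist_le W'
        rw [Walk.length_cons] at hWlen
        omega
  choose g hg using hstep'
  have hu_not_off : ∀ z : V, z ∉ p.support → z ≠ u :=
    fun z hz h => hz (h ▸ p.start_mem_support)
  by_cases hb : ∃ w, w ∉ p.support ∧ g w ∉ p.support
  · -- some off-path vertex has an off-path parent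
    obtain ⟨w₁, hw₁, hgw₁⟩ := hb
    set f : V → V := fun z => if z ∈ p.support then spf z else g z with hf
    set rk : V → ℕ := fun z =>
      if z ∈ p.support then p.support.idxOf z else p.length + 2 + G.dist z u with hrk
    have hfs : ∀ z, z ∈ p.support → f z = spf z := by
      intro z h
      show (if z ∈ p.support then spf z else g z) = spf z
      exact if_pos h
    have hfo : ∀ z, z ∉ p.support → f z = g z := by
      intro z h
      show (if z ∈ p.support then spf z else g z) = g z
      exact if_neg h
    have hrks : ∀ z, z ∈ p.support → rk z = p.support.idxOf z := by
      intro z h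
      show (if z ∈ p.support then p.support.idxOf z else p.length + 2 + G.dist z u) = _
      exact if_pos h
    have hrko : ∀ z, z ∉ p.support → rk z = p.length + 2 + G.dist z u := by
      intro z h
      show (if z ∈ p.support then p.support.idxOf z else p.length + 2 + G.dist z u) = _
      exact if_neg h
    refine master hnotree f u rk ?_ ?_ (insert u (insert v (offF.erase (g w₁)))) ?_ ?_
    · intro z hz
      by_cases hzs : z ∈ p.support
      · rw [hfs z hzs]; exact hspf_adj z hzs hz
      · rw [hfo z hzs]; exact (hg z hz).1
    · intro z hz
      by_cases hzs : z ∈ p.support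
      · rw [hfs z hzs, hrks z hzs, hrks _ (hspf_mem z hzs), hspf_idx z hzs hz]
        have := hidx_pos z hzs hz
        omega
      · rw [hfo z hzs, hrko z hzs]
        by_cases hgs : g z ∈ p.support
        · rw [hrks _ hgs]
          have := hidx_lt _ hgs
          omega
        · rw [hrko _ hgs]
          have := (hg z hz).2
          omega
    · have hmem : g w₁ ∈ offF := (hmem_offF _).mpr hgw₁
      have h1 : (offF.erase (g w₁)).card = offF.card - 1 := Finset.card_erase_of_mem hmem
      have h2 : 1 ≤ offF.card := Finset.card_pos.mpr ⟨_, hmem⟩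
      have h3 := Finset.card_insert_le u (insert v (offF.erase (g w₁)))
      have h4 := Finset.card_insert_le v (offF.erase (g w₁))
      omega
    · intro z hz
      rcases hz with rfl | hnc
      · exact Finset.mem_insert_self _ _
      by_cases hzs : z ∈ p.support
      · by_cases hzv : z = v
        · subst hzv; exact Finset.mem_insert_of_mem (Finset.mem_insert_self _ _)
        exfalso
        obtain ⟨y', hy1, hy2, hy3⟩ := hspf_child z hzs hzv
        exact hnc y' hy2 ((hfs y' hy1).trans hy3)
      · have hzoff : z ∈ offF := (hmem_offF _).mpr hzs
        have hzne : z ≠ g w₁ := by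
          intro h
          exact hnc w₁ (hu_not_off w₁ hw₁) ((hfo w₁ hw₁).trans h.symm)
        exact Finset.mem_insert_of_mem (Finset.mem_insert_of_mem
          (Finset.mem_erase.mpr ⟨hzne, hzoff⟩))
  · -- all off-path vertices attach directly to the path : use the edge x-y
    push_neg at hb
    have hxy : x ≠ y := hadj.ne
    set f : V → V := fun z => if z = y then x else if z ∈ p.support then spf z else g z with hf
    set rk : V → ℕ := fun z => if z = y then p.length + 3 + G.dist x u
      else if z ∈ p.support then p.support.idxOf z else p.length + 2 + G.dist z u with hrk
    have hfy : f y = x := by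
      show (if y = y then x else if y ∈ p.support then spf y else g y) = x
      rw [if_pos rfl]
    have hfs : ∀ z, z ∈ p.support → f z = spf z := by
      intro z h
      show (if z = y then x else if z ∈ p.support then spf z else g z) = spf z
      rw [if_neg (fun he : z = y => hyo (he ▸ h)), if_pos h]
    have hfo : ∀ z, z ∉ p.support → z ≠ y → f z = g z := by
      intro z h hzy
      show (if z = y then x else if z ∈ p.support then spf z else g z) = g z
      rw [if_neg hzy, if_neg h]
    have hrky : rk y = p.length + 3 + G.dist x u := by
      show (if y = y then p.length + 3 + G.dist x u else _) = _
      rw [if_pos rfl]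
    have hrks : ∀ z, z ∈ p.support → rk z = p.support.idxOf z := by
      intro z h
      show (if z = y then p.length + 3 + G.dist x u
        else if z ∈ p.support then p.support.idxOf z else p.length + 2 + G.dist z u) = _
      rw [if_neg (fun he : z = y => hyo (he ▸ h)), if_pos h]
    have hrko : ∀ z, z ∉ p.support → z ≠ y → rk z = p.length + 2 + G.dist z u := by
      intro z h hzy
      show (if z = y then p.length + 3 + G.dist x u
        else if z ∈ p.support then p.support.idxOf z else p.length + 2 + G.dist z u) = _
      rw [if_neg hzy, if_neg h]
    refine master hnotree f u rk ?_ ?_ (insert u (insert v (offF.erase x))) ?_ ?_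
    · intro z hz
      by_cases hzy : z = y
      · subst hzy; rw [hfy]; exact hadj.symm
      by_cases hzs : z ∈ p.support
      · rw [hfs z hzs]; exact hspf_adj z hzs hz
      · rw [hfo z hzs hzy]; exact (hg z hz).1
    · intro z hz
      by_cases hzy : z = y
      · subst hzy
        rw [hfy, hrky, hrko x hxo hxy]
        omega
      by_cases hzs : z ∈ p.support
      · rw [hfs z hzs, hrks z hzs, hrks _ (hspf_mem z hzs), hspf_idx z hzs hz]
        have := hidx_pos z hzs hz
        omega
      · rw [hfo z hzs hzy, hrko z hzs hzy]
        have hgz : g z ∈ p.support := hb z hzs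
        rw [hrks _ hgz]
        have := hidx_lt _ hgz
        omega
    · have hmem : x ∈ offF := (hmem_offF _).mpr hxo
      have h1 : (offF.erase x).card = offF.card - 1 := Finset.card_erase_of_mem hmem
      have h2 : 1 ≤ offF.card := Finset.card_pos.mpr ⟨_, hmem⟩
      have h3 := Finset.card_insert_le u (insert v (offF.erase x))
      have h4 := Finset.card_insert_le v (offF.erase x)
      omega
    · intro z hz
      rcases hz with rfl | hnc
      · exact Finset.mem_insert_self _ _
      by_cases hzs : z ∈ p.support
      · by_cases hzv : z = v
        · subst hzv; exact Finset.mem_insert_of_mem (Finset.mem_insert_self _ _)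
        exfalso
        obtain ⟨y', hy1, hy2, hy3⟩ := hspf_child z hzs hzv
        exact hnc y' hy2 ((hfs y' hy1).trans hy3)
      · have hzoff : z ∈ offF := (hmem_offF _).mpr hzs
        have hzne : z ≠ x := by
          intro h
          exact hnc y (hu_not_off y hyo) (hfy.trans h.symm)
        exact Finset.mem_insert_of_mem (Finset.mem_insert_of_mem
          (Finset.mem_erase.mpr ⟨hzne, hzoff⟩))
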